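/- Define G_α ∈ Λ(Q^n) for α ∈ {0,1}^n recursively by G_{1^s 0^{n-s}} = F_s and G_{u 0 1^s 0^{n-k-s}} = G_{u 1^s 0^{n-k-s+1}} - (-1)^{m(u)} θ_k G_{u 1^{s-1} 0^{n-k-s+2}} where u has length k-1 and m(u) is the number of 1s in u. Then the lexicographically largest monomial appearing in G_α (with ordering θ_1 > θ_2 > ... > θ_n on variables, exponent-vector lex order on monomials) is θ^α, with coefficient 1. -/

import Mathlib

open ExteriorAlgebra

attribute [local instance] Classical.propDecidable

/-- The generator `θ_i` of the exterior algebra `Λ(ℚ^n)`. -/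
noncomputable def theta (n : ℕ) (i : Fin n) : ExteriorAlgebra ℚ (Fin n → ℚ) :=
  ExteriorAlgebra.ι ℚ (Pi.single i (1 : ℚ))

/-- For `A = {a_1 < ⋯ < a_k}`, the monomial `θ_A = θ_{a_1} ⋯ θ_{a_k}`. -/
noncomputable def thetaA (n : ℕ) (A : Finset (Fin n)) : ExteriorAlgebra ℚ (Fin n → ℚ) :=
  ((A.sort (· ≤ ·)).map (theta n)).prod

/-- The fundamental quasisymmetric invariant `F_{1^r} = Σ_{|A| = r} θ_A`. -/
noncomputable def Fq (n r : ℕ) : ExteriorAlgebra ℚ (Fin n → ℚ) :=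
  ∑ A ∈ Finset.powersetCard r (Finset.univ : Finset (Fin n)), thetaA n A

/-- Number of ones in `α` among the first `p` positions (0-indexed). -/
def onesBelow {n : ℕ} (α : Fin n → Bool) (p : ℕ) : ℕ :=
  (Finset.univ.filter (fun i : Fin n => (i : ℕ) < p ∧ α i = true)).card

/-- `G : ({0,1}^n → Λ(ℚ^n))` satisfies the defining recursion of the `G_α`:
`G_{1^s 0^{n-s}} = F_s`, and for a word `u 0 1^s 0^{n-k-s}` (here `u = β` on the
`p = k-1` first 0-indexed positions, the distinguished `0` at 0-indexed position `p`,
then a block of `s ≥ 1` ones),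
`G_{u01^s0^{n-k-s}} = G_{u1^s0^{n-k-s+1}} - (-1)^{m_1(u)} θ_k G_{u1^{s-1}0^{n-k-s+2}}`. -/
def GRec (n : ℕ) (G : (Fin n → Bool) → ExteriorAlgebra ℚ (Fin n → ℚ)) : Prop :=
  (∀ s : ℕ, s ≤ n → G (fun i => decide ((i : ℕ) < s)) = Fq n s) ∧
  (∀ (β : Fin n → Bool) (p s : ℕ) (hs : 1 ≤ s) (hps : p + s < n),
    G (fun i => if (i : ℕ) < p then β i else decide (p < (i : ℕ) ∧ (i : ℕ) ≤ p + s))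
    = G (fun i => if (i : ℕ) < p then β i else decide ((i : ℕ) < p + s))
      - ((-1 : ℚ) ^ onesBelow β p) •
        (theta n ⟨p, by omega⟩ *
          G (fun i => if (i : ℕ) < p then β i else decide ((i : ℕ) < p + s - 1))))
/-- `β` is lexicographically smaller than `α` as an exponent vector (with
`θ_1 > θ_2 > ⋯ > θ_n`): at the first position where they differ, `β` has a `0`
and `α` has a `1`. -/
def LexLt {n : ℕ} (β α : Fin n → Bool) : Prop :=
  ∃ j : Fin n, (∀ i : Fin n, i < j → β i = α i) ∧ β j = false ∧ α j = true

/-- The monomial `θ^α`. -/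
noncomputable def thetaMon {n : ℕ} (α : Fin n → Bool) : ExteriorAlgebra ℚ (Fin n → ℚ) :=
  thetaA n (Finset.univ.filter (fun i => α i = true))


section Alg

open Finset

variable {n : ℕ}

lemma theta_anticomm (i j : Fin n) : theta n i * theta n j = - (theta n j * theta n i) := by
  have h : theta n i * theta n j + theta n j * theta n i = 0 :=
    ExteriorAlgebra.ι_add_mul_swap (R := ℚ) (M := Fin n → ℚ) (Pi.single i (1:ℚ)) (Pi.single j (1:ℚ))
  exact eq_neg_of_add_eq_zero_left h

lemma theta_sq (i : Fin n) : theta n i * theta n i = 0 :=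
  ExteriorAlgebra.ι_sq_zero (R := ℚ) (M := Fin n → ℚ) (Pi.single i (1:ℚ))

lemma theta_mul_prod_of_mem (p : Fin n) :
    ∀ (l : List (Fin n)), p ∈ l → theta n p * (l.map (theta n)).prod = 0 := by
  intro l
  induction l with
  | nil => simp
  | cons a t ih =>
    intro hp
    rw [List.map_cons, List.prod_cons, ← mul_assoc]
    rcases List.mem_cons.1 hp with h | h
    · subst h
      rw [theta_sq, zero_mul]
    · rw [theta_anticomm, neg_mul, mul_assoc, ih h, mul_zero, neg_zero]

lemma theta_mul_prod_sorted (p : Fin n) :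
    ∀ (l : List (Fin n)), l.Pairwise (· ≤ ·) → p ∉ l →
      theta n p * (l.map (theta n)).prod
        = ((-1:ℚ) ^ ((l.filter (fun a => a < p)).length)) •
            ((l.orderedInsert (· ≤ ·) p).map (theta n)).prod := by
  intro l
  induction l with
  | nil => simp
  | cons a t ih =>
    intro hsort hp
    have hpa : p ≠ a := fun h => hp (h ▸ List.mem_cons_self)
    by_cases hle : p ≤ a
    · have hfilt : (a :: t).filter (fun x => decide (x < p)) = [] := by
        rw [List.filter_eq_nil_iff]
        intro x hx
        have : a ≤ x := by
          rcases List.mem_cons.1 hx with h | h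
          · exact h ▸ le_refl a
          · exact (List.pairwise_cons.1 hsort).1 x h
        simp only [decide_eq_true_eq, not_lt]
        exact le_trans hle this
      rw [List.orderedInsert, if_pos hle]
      simp only [hfilt, List.length_nil, pow_zero, one_smul, List.map_cons, List.prod_cons]
    · have hal : a < p := lt_of_le_of_ne (le_of_not_ge hle) (fun h => hpa h.symm)
      have hpt : p ∉ t := fun h => hp (List.mem_cons_of_mem a h)
      have hts : t.Pairwise (· ≤ ·) := (List.pairwise_cons.1 hsort).2
      rw [List.orderedInsert, if_neg hle]
      have hfilt : ((a :: t).filter (fun x => decide (x < p))).length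
          = (t.filter (fun x => decide (x < p))).length + 1 := by
        rw [List.filter_cons, if_pos (by simpa using hal)]
        simp
      rw [hfilt, List.map_cons, List.prod_cons, ← mul_assoc, theta_anticomm p a, neg_mul,
        mul_assoc, ih hts hpt, List.map_cons, List.prod_cons, mul_smul_comm, pow_succ, mul_neg_one, neg_smul]

lemma sort_insert_eq (p : Fin n) (A : Finset (Fin n)) (hp : p ∉ A) :
    (insert p A).sort (· ≤ ·) = (A.sort (· ≤ ·)).orderedInsert (· ≤ ·) p := by
  refine List.Perm.eq_of_pairwise' (Finset.pairwise_sort _ _)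
    (List.Pairwise.orderedInsert p _ (Finset.pairwise_sort _ _)) ?_
  have t1 := Finset.sort_perm_toList (insert p A) (· ≤ ·)
  have t2 := Finset.toList_insert hp
  have t3 := Finset.sort_perm_toList A (· ≤ ·)
  have t4 := List.perm_orderedInsert (· ≤ ·) p (A.sort (· ≤ ·))
  exact t1.trans ((t2.trans (List.Perm.cons p t3.symm)).trans t4.symm)

lemma length_filter_sort (p : Fin n) (A : Finset (Fin n)) :
    ((A.sort (· ≤ ·)).filter (fun a => a < p)).length = (A.filter (fun a => a < p)).card := by
  classical
  have h1 : ((A.sort (· ≤ ·)).filter (fun a => a < p)).length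
      = ((A.toList).filter (fun a => a < p)).length :=
    ((Finset.sort_perm_toList A (· ≤ ·)).filter _).length_eq
  rw [h1, ← List.countP_eq_length_filter]
  have h2 : (A.toList).countP (fun a => decide (a < p)) = Multiset.countP (fun a => decide (a < p)) A.val := by
    rw [← Multiset.coe_countP, Finset.coe_toList]
    simp
  rw [h2, Multiset.countP_eq_card_filter]
  rw [Finset.card, Finset.filter_val]
  congr 1
  exact Multiset.filter_congr (fun x _ => by simp)

lemma theta_mul_thetaA_of_mem (p : Fin n) (A : Finset (Fin n)) (hp : p ∈ A) :
    theta n p * thetaA n A = 0 :=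
  theta_mul_prod_of_mem p _ ((Finset.mem_sort _).2 hp)

lemma theta_mul_thetaA_of_not_mem (p : Fin n) (A : Finset (Fin n)) (hp : p ∉ A) :
    theta n p * thetaA n A
      = ((-1:ℚ) ^ ((A.filter (fun a => a < p)).card)) • thetaA n (insert p A) := by
  unfold thetaA
  rw [theta_mul_prod_sorted p _ (Finset.pairwise_sort _ _)
      (fun h => hp ((Finset.mem_sort _).1 h)), length_filter_sort, sort_insert_eq p A hp]

end Alg

section Comb

open Finset

variable {n : ℕ}

/-- Number of ones of `B` at positions `≥ q`. -/
def cntq (B : Fin n → Bool) (q : ℕ) : ℕ :=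
  ∑ i : Fin n, if q ≤ (i:ℕ) ∧ B i = true then 1 else 0

/-- `α` is of the form `π 1^a 0^*` with `π` of length `q`. -/
def shape (α : Fin n → Bool) (q a : ℕ) : Prop :=
  ∀ i : Fin n, q ≤ (i:ℕ) → (α i = true ↔ (i:ℕ) < q + a)

def PMs (α : Fin n → Bool) (q a : ℕ) : Finset (Fin n → Bool) :=
  Finset.univ.filter fun B => (∀ i : Fin n, (i:ℕ) < q → B i = α i) ∧ cntq B q = a

def Drp (α : Fin n → Bool) (q : ℕ) : Finset (Fin n → Bool) :=
  Finset.univ.filter fun B =>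
    ∃ j : Fin n, (j:ℕ) < q ∧ (∀ i : Fin n, i < j → B i = α i) ∧ B j = false ∧ α j = true

def wtv (α : Fin n → Bool) : ℕ := ∑ i : Fin n, if α i = true then (i:ℕ) else 0

lemma mem_PMs {α B : Fin n → Bool} {q a : ℕ} :
    B ∈ PMs α q a ↔ (∀ i : Fin n, (i:ℕ) < q → B i = α i) ∧ cntq B q = a := by
  simp [PMs]

lemma mem_Drp {α B : Fin n → Bool} {q : ℕ} :
    B ∈ Drp α q ↔
      ∃ j : Fin n, (j:ℕ) < q ∧ (∀ i : Fin n, i < j → B i = α i) ∧ B j = false ∧ α j = true := by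
  simp [Drp]

lemma sum_ind_interval (u v : ℕ) (hv : v ≤ n) :
    (∑ i : Fin n, if u ≤ (i:ℕ) ∧ (i:ℕ) < v then 1 else 0) = v - u := by
  rw [Fin.sum_univ_eq_sum_range (fun i => if u ≤ i ∧ i < v then 1 else 0) n,
    ← Finset.card_filter]
  have : (Finset.range n).filter (fun i => u ≤ i ∧ i < v) = Finset.Ico u v := by
    ext i
    simp only [Finset.mem_filter, Finset.mem_range, Finset.mem_Ico]
    omega
  rw [this, Nat.card_Ico]

lemma cntq_of_shape {α : Fin n → Bool} {q a : ℕ} (hsh : shape α q a) (h : q + a ≤ n) :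
    cntq α q = a := by
  unfold cntq
  have hpt : ∀ i : Fin n, (if q ≤ (i:ℕ) ∧ α i = true then 1 else 0)
      = (if q ≤ (i:ℕ) ∧ (i:ℕ) < q + a then 1 else 0) := by
    intro i
    by_cases hq : q ≤ (i:ℕ)
    · by_cases hα : α i = true
      · have := (hsh i hq).1 hα
        simp [hq, hα, this]
      · have h2 : ¬ ((i:ℕ) < q + a) := fun hc => hα ((hsh i hq).2 hc)
        simp [hq, hα, h2]
    · simp [hq]
  rw [Finset.sum_congr rfl (fun i _ => hpt i), sum_ind_interval q (q+a) h]
  omega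

lemma cntq_le (B : Fin n → Bool) (q : ℕ) {q' : ℕ} (h : q ≤ q') : cntq B q' ≤ cntq B q := by
  apply Finset.sum_le_sum
  intro i _
  by_cases hB : B i = true
  · simp only [hB, and_true]
    split_ifs <;> omega
  · simp [hB]

lemma cntq_split (B : Fin n → Bool) {q q' : ℕ} (h : q ≤ q') :
    cntq B q = cntq B q' + ∑ i : Fin n, (if q ≤ (i:ℕ) ∧ (i:ℕ) < q' ∧ B i = true then 1 else 0) := by
  unfold cntq
  rw [← Finset.sum_add_distrib]
  refine Finset.sum_congr rfl fun i _ => ?_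
  by_cases hB : B i = true
  · simp only [hB, and_true]
    split_ifs <;> omega
  · simp [hB]

lemma cntq_succ (B : Fin n → Bool) (p : Fin n) :
    cntq B (p:ℕ) = (if B p = true then 1 else 0) + cntq B ((p:ℕ)+1) := by
  unfold cntq
  have h1 : (if B p = true then (1:ℕ) else 0)
      = ∑ i : Fin n, if i = p then (if B i = true then 1 else 0) else 0 := by
    rw [Finset.sum_ite_eq' Finset.univ p (fun i => if B i = true then 1 else 0)]
    simp
  rw [h1, ← Finset.sum_add_distrib]
  refine Finset.sum_congr rfl fun i _ => ?_
  by_cases hip : i = p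
  · subst hip
    by_cases hB : B i = true <;> simp [hB]
  · have hv : (i:ℕ) ≠ (p:ℕ) := fun hc => hip (Fin.ext hc)
    by_cases hB : B i = true
    · simp only [hB, and_true, if_neg hip]
      split_ifs <;> omega
    · simp [hip, hB]

lemma onesBelow_eq_sum (B : Fin n → Bool) (p : ℕ) :
    onesBelow B p = ∑ i : Fin n, if (i:ℕ) < p ∧ B i = true then 1 else 0 :=
  Finset.card_filter _ _

lemma onesBelow_congr {B C : Fin n → Bool} {p : ℕ} (h : ∀ i : Fin n, (i:ℕ) < p → B i = C i) :
    onesBelow B p = onesBelow C p := by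
  rw [onesBelow_eq_sum, onesBelow_eq_sum]
  refine Finset.sum_congr rfl fun i _ => ?_
  by_cases hi : (i:ℕ) < p
  · rw [h i hi]
  · simp [hi]

lemma theta_mul_thetaMon_of_true {B : Fin n → Bool} {p : Fin n} (h : B p = true) :
    theta n p * thetaMon B = 0 :=
  theta_mul_thetaA_of_mem p _ (by simp [h])

lemma theta_mul_thetaMon_of_false {B : Fin n → Bool} {p : Fin n} (h : B p = false) :
    theta n p * thetaMon B
      = ((-1:ℚ) ^ onesBelow B (p:ℕ)) • thetaMon (Function.update B p true) := by
  have hp : p ∉ Finset.univ.filter (fun i => B i = true) := by simp [h]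
  rw [thetaMon, theta_mul_thetaA_of_not_mem p _ hp]
  have hcard : ((Finset.univ.filter (fun i => B i = true)).filter (fun a => a < p)).card
      = onesBelow B (p:ℕ) := by
    unfold onesBelow
    congr 1
    ext i
    simp only [Finset.mem_filter, Finset.mem_univ, true_and]
    constructor
    · rintro ⟨h1, h2⟩; exact ⟨h2, h1⟩
    · rintro ⟨h1, h2⟩; exact ⟨h2, h1⟩
  have hins : insert p (Finset.univ.filter fun i => B i = true)
      = Finset.univ.filter (fun i => Function.update B p true i = true) := by
    ext i
    simp only [Finset.mem_insert, Finset.mem_filter, Finset.mem_univ, true_and,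
      Function.update_apply]
    by_cases hip : i = p <;> simp [hip]
  rw [hcard, hins, thetaMon]

end Comb

section Trans

open Finset

variable {n : ℕ}

lemma Drp_mono {α : Fin n → Bool} {q q' : ℕ} (h : q ≤ q') : Drp α q ⊆ Drp α q' := by
  intro B hB
  rw [mem_Drp] at hB ⊢
  obtain ⟨j, hj, h1, h2, h3⟩ := hB
  exact ⟨j, lt_of_lt_of_le hj h, h1, h2, h3⟩

lemma mid_congr {α B : Fin n → Bool} {q q' : ℕ}
    (hag : ∀ i : Fin n, (i:ℕ) < q' → B i = α i) :
    (∑ i : Fin n, if q ≤ (i:ℕ) ∧ (i:ℕ) < q' ∧ B i = true then 1 else 0)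
      = ∑ i : Fin n, if q ≤ (i:ℕ) ∧ (i:ℕ) < q' ∧ α i = true then 1 else 0 := by
  refine Finset.sum_congr rfl fun i _ => ?_
  by_cases hi : (i:ℕ) < q'
  · rw [hag i hi]
  · have h1 : ¬ (q ≤ (i:ℕ) ∧ (i:ℕ) < q' ∧ B i = true) := fun hc => hi hc.2.1
    have h2 : ¬ (q ≤ (i:ℕ) ∧ (i:ℕ) < q' ∧ α i = true) := fun hc => hi hc.2.1
    rw [if_neg h1, if_neg h2]

lemma PM_anti {α : Fin n → Bool} {q a q' a' : ℕ} (hsh : shape α q a) (hsh' : shape α q' a')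
    (hqq' : q ≤ q') (hle : q + a ≤ n) (hle' : q' + a' ≤ n) :
    PMs α q' a' ⊆ PMs α q a := by
  intro B hB
  rw [mem_PMs] at hB ⊢
  obtain ⟨hag, hcnt⟩ := hB
  refine ⟨fun i hi => hag i (lt_of_lt_of_le hi hqq'), ?_⟩
  have e1 := cntq_split B hqq'
  have e2 := cntq_split α hqq'
  have e3 : cntq α q = a := cntq_of_shape hsh hle
  have e4 : cntq α q' = a' := cntq_of_shape hsh' hle'
  have e5 := mid_congr (q := q) hag
  omega

lemma PM_subset_or {α : Fin n → Bool} {q a q' a' : ℕ} (hsh : shape α q a) (hsh' : shape α q' a')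
    (hqq' : q ≤ q') (hle : q + a ≤ n) (hle' : q' + a' ≤ n) {B : Fin n → Bool}
    (hB : B ∈ PMs α q a) : B ∈ PMs α q' a' ∨ B ∈ Drp α q' := by
  rw [mem_PMs] at hB
  obtain ⟨hag, hcnt⟩ := hB
  by_cases hag' : ∀ i : Fin n, (i:ℕ) < q' → B i = α i
  · left
    rw [mem_PMs]
    refine ⟨hag', ?_⟩
    have e1 := cntq_split B hqq'
    have e2 := cntq_split α hqq'
    have e3 : cntq α q = a := cntq_of_shape hsh hle
    have e4 : cntq α q' = a' := cntq_of_shape hsh' hle'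
    have e5 := mid_congr (q := q) hag'
    omega
  · right
    push_neg at hag'
    have hne : (Finset.univ.filter fun i : Fin n => (i:ℕ) < q' ∧ B i ≠ α i).Nonempty := by
      obtain ⟨i, hi, hnei⟩ := hag'
      exact ⟨i, by simp [hi, hnei]⟩
    have hjmem := (Finset.mem_filter.1
      (Finset.min'_mem (Finset.univ.filter fun i : Fin n => (i:ℕ) < q' ∧ B i ≠ α i) hne)).2
    set j := (Finset.univ.filter fun i : Fin n => (i:ℕ) < q' ∧ B i ≠ α i).min' hne with hj
    obtain ⟨hjq', hjne⟩ := hjmem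
    have hmin : ∀ i : Fin n, i < j → B i = α i := by
      intro i hij
      by_contra hcon
      have hiv : (i:ℕ) < (j:ℕ) := hij
      have hiq' : (i:ℕ) < q' := by omega
      have hji : j ≤ i := Finset.min'_le _ i
        (Finset.mem_filter.2 ⟨Finset.mem_univ i, hiq', hcon⟩)
      have : (j:ℕ) ≤ (i:ℕ) := hji
      omega
    have hjq : q ≤ (j:ℕ) := by
      by_contra hc
      exact hjne (hag j (by omega))
    have hαj : α j = true := by
      by_contra hc
      have hBj : B j = true := by
        cases hBv : B j
        · cases hαv : α j
          · exact absurd (hBv.trans hαv.symm) hjne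
          · exact absurd hαv hc
        · rfl
      have hja : q + a ≤ (j:ℕ) := by
        by_contra hc2
        exact hc ((hsh j hjq).2 (by omega))
      have hsum : (∑ i : Fin n, ((if q ≤ (i:ℕ) ∧ (i:ℕ) < q + a then 1 else 0)
            + (if i = j then 1 else 0)))
          ≤ ∑ i : Fin n, if q ≤ (i:ℕ) ∧ B i = true then (1:ℕ) else 0 := by
        apply Finset.sum_le_sum
        intro i _
        by_cases hij : i = j
        · have hvij : (i:ℕ) = (j:ℕ) := by rw [hij]
          have h0 : ¬ (q ≤ (i:ℕ) ∧ (i:ℕ) < q + a) := by omega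
          have hBi : B i = true := by rw [hij]; exact hBj
          have hq2 : q ≤ (i:ℕ) := by omega
          rw [if_neg h0, if_pos hij, if_pos ⟨hq2, hBi⟩]
        · rw [if_neg hij]
          by_cases hi : q ≤ (i:ℕ) ∧ (i:ℕ) < q + a
          · have hlt : i < j := by
              have : (i:ℕ) < (j:ℕ) := by omega
              exact this
            have hBi : B i = true := by
              rw [hmin i hlt]
              exact (hsh i hi.1).2 hi.2
            rw [if_pos hi, if_pos ⟨hi.1, hBi⟩]
          · rw [if_neg hi]
            exact Nat.zero_le _
      rw [Finset.sum_add_distrib, sum_ind_interval q (q+a) hle] at hsum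
      have hone : (∑ i : Fin n, if i = j then (1:ℕ) else 0) = 1 := by
        rw [Finset.sum_ite_eq' Finset.univ j (fun _ => (1:ℕ))]
        simp
      rw [hone] at hsum
      unfold cntq at hcnt
      omega
    have hBj : B j = false := by
      cases hBv : B j
      · rfl
      · exact absurd (hBv.trans hαj.symm) hjne
    rw [mem_Drp]
    exact ⟨j, hjq', hmin, hBj, hαj⟩

end Trans

section Base

open Finset

variable {n : ℕ}

lemma cntq_zero_indicator (A : Finset (Fin n)) :
    cntq (fun x => decide (x ∈ A)) 0 = A.card := by
  unfold cntq
  have hpt : ∀ i : Fin n, (if 0 ≤ (i:ℕ) ∧ (decide (i ∈ A)) = true then (1:ℕ) else 0)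
      = if i ∈ A then 1 else 0 := by
    intro i
    by_cases hi : i ∈ A <;> simp [hi]
  rw [Finset.sum_congr rfl (fun i _ => hpt i), ← Finset.card_filter,
    Finset.filter_univ_mem]

lemma thetaMon_indicator (A : Finset (Fin n)) :
    thetaMon (fun x => decide (x ∈ A)) = thetaA n A := by
  unfold thetaMon
  congr 1
  ext i
  simp

lemma Fq_eq_sum (s : ℕ) :
    Fq n s = ∑ B ∈ Finset.univ.filter (fun B : Fin n → Bool => cntq B 0 = s), thetaMon B := by
  unfold Fq
  refine Finset.sum_nbij' (i := fun A : Finset (Fin n) => (fun x => decide (x ∈ A)))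
    (j := fun B : Fin n → Bool => Finset.univ.filter (fun x => B x = true))
    ?_ ?_ ?_ ?_ ?_
  · intro A hA
    rw [Finset.mem_powersetCard_univ] at hA
    rw [Finset.mem_filter]
    exact ⟨Finset.mem_univ _, by rw [cntq_zero_indicator, hA]⟩
  · intro B hB
    rw [Finset.mem_filter] at hB
    rw [Finset.mem_powersetCard_univ]
    rw [← hB.2]
    unfold cntq
    rw [Finset.card_filter]
    refine Finset.sum_congr rfl fun i _ => ?_
    by_cases hi : B i = true <;> simp [hi]
  · intro A hA
    ext i
    simp
  · intro B hB
    funext x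
    simp
  · intro A hA
    rw [thetaMon_indicator]

end Base

section Help

open Finset

variable {n : ℕ}

lemma cntq_le_n (B : Fin n → Bool) (q : ℕ) : cntq B q ≤ n := by
  unfold cntq
  calc (∑ i : Fin n, if q ≤ (i:ℕ) ∧ B i = true then 1 else 0)
      ≤ ∑ _i : Fin n, 1 := Finset.sum_le_sum (fun i _ => by split_ifs <;> omega)
    _ = n := by simp

lemma cntq_congr {B C : Fin n → Bool} (q : ℕ) (h : ∀ i : Fin n, q ≤ (i:ℕ) → B i = C i) :
    cntq B q = cntq C q := by
  refine Finset.sum_congr rfl fun i _ => ?_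
  by_cases hi : q ≤ (i:ℕ)
  · rw [h i hi]
  · rw [if_neg (fun hc => hi hc.1), if_neg (fun hc => hi hc.1)]

lemma PMs_congr {β β' : Fin n → Bool} {q a : ℕ} (h : ∀ i : Fin n, (i:ℕ) < q → β i = β' i) :
    PMs β q a = PMs β' q a := by
  ext B
  rw [mem_PMs, mem_PMs]
  constructor
  · rintro ⟨h1, h2⟩
    exact ⟨fun i hi => (h1 i hi).trans (h i hi), h2⟩
  · rintro ⟨h1, h2⟩
    exact ⟨fun i hi => (h1 i hi).trans (h i hi).symm, h2⟩

lemma Drp_congr {β β' : Fin n → Bool} {q : ℕ} (h : ∀ i : Fin n, (i:ℕ) < q → β i = β' i) :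
    Drp β q = Drp β' q := by
  ext B
  rw [mem_Drp, mem_Drp]
  constructor
  · rintro ⟨j, hj, h1, h2, h3⟩
    refine ⟨j, hj, fun i hi => (h1 i hi).trans (h i ?_), h2, (h j hj).symm.trans h3⟩
    exact lt_trans (show (i:ℕ) < (j:ℕ) from hi) hj
  · rintro ⟨j, hj, h1, h2, h3⟩
    refine ⟨j, hj, fun i hi => (h1 i hi).trans (h i ?_).symm, h2, (h j hj).trans h3⟩
    exact lt_trans (show (i:ℕ) < (j:ℕ) from hi) hj

/-- shape of `fun i => if i < c then β i else decide (i < c + d)` at cut `c`. -/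
lemma shape_ifdecide (β : Fin n → Bool) (c d : ℕ) :
    shape (fun i => if (i:ℕ) < c then β i else decide ((i:ℕ) < c + d)) c d := by
  intro i hi
  show (if (i:ℕ) < c then β i else decide ((i:ℕ) < c + d)) = true ↔ (i:ℕ) < c + d
  rw [if_neg (Nat.not_lt.2 hi)]
  simp

/-- The `Jst` invariant. -/
def Jst (G : (Fin n → Bool) → ExteriorAlgebra ℚ (Fin n → ℚ)) (α : Fin n → Bool)
    (q a : ℕ) : Prop :=
  ∃ f : (Fin n → Bool) → ℚ,
    (∀ B, f B ≠ 0 → B ∈ PMs α q a ∨ B ∈ Drp α q) ∧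
    (∀ B ∈ PMs α q a, f B = 1) ∧
    G α = ∑ B : Fin n → Bool, f B • thetaMon B

lemma Jst_transfer {G : (Fin n → Bool) → ExteriorAlgebra ℚ (Fin n → ℚ)} {α : Fin n → Bool}
    {q a q' a' : ℕ} (hsh : shape α q a) (hsh' : shape α q' a') (hqq' : q ≤ q')
    (hle : q + a ≤ n) (hle' : q' + a' ≤ n) (h : Jst G α q a) : Jst G α q' a' := by
  obtain ⟨f, hsupp, hone, hsum⟩ := h
  refine ⟨f, ?_, ?_, hsum⟩
  · intro B hB
    rcases hsupp B hB with h1 | h1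
    · exact PM_subset_or hsh hsh' hqq' hle hle' h1
    · exact Or.inr (Drp_mono hqq' h1)
  · intro B hB
    exact hone B (PM_anti hsh hsh' hqq' hle hle' hB)

lemma PMs_zero (α : Fin n → Bool) (a : ℕ) :
    PMs α 0 a = Finset.univ.filter (fun B : Fin n → Bool => cntq B 0 = a) := by
  ext B
  rw [mem_PMs, Finset.mem_filter]
  constructor
  · rintro ⟨-, h2⟩
    exact ⟨Finset.mem_univ _, h2⟩
  · rintro ⟨-, h2⟩
    exact ⟨fun i hi => absurd hi (by omega), h2⟩

lemma Jst_base {G : (Fin n → Bool) → ExteriorAlgebra ℚ (Fin n → ℚ)} (hG : GRec n G)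
    {α : Fin n → Bool} (hmono : ∀ i j : Fin n, i ≤ j → α j = true → α i = true) :
    shape α 0 (cntq α 0) ∧ Jst G α 0 (cntq α 0) := by
  set s := cntq α 0 with hs
  have hsn : s ≤ n := cntq_le_n α 0
  have hshape : shape α 0 s := by
    intro i _
    constructor
    · intro hαi
      have hge : (∑ j : Fin n, if 0 ≤ (j:ℕ) ∧ (j:ℕ) < (i:ℕ)+1 then 1 else 0)
          ≤ ∑ j : Fin n, if 0 ≤ (j:ℕ) ∧ α j = true then 1 else 0 := by
        apply Finset.sum_le_sum
        intro j _
        by_cases hj : (j:ℕ) < (i:ℕ)+1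
        · have : α j = true := hmono j i (show (j:ℕ) ≤ (i:ℕ) by omega) hαi
          simp [hj, this]
        · simp [hj]
      rw [sum_ind_interval 0 ((i:ℕ)+1) (by omega)] at hge
      have : cntq α 0 = ∑ j : Fin n, if 0 ≤ (j:ℕ) ∧ α j = true then 1 else 0 := rfl
      omega
    · intro his
      by_contra hαi
      have hαi' : α i = false := by
        cases hv : α i
        · rfl
        · exact absurd hv hαi
      have hub : (∑ j : Fin n, if 0 ≤ (j:ℕ) ∧ α j = true then 1 else 0)
          ≤ ∑ j : Fin n, if 0 ≤ (j:ℕ) ∧ (j:ℕ) < (i:ℕ) then 1 else 0 := by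
        apply Finset.sum_le_sum
        intro j _
        by_cases hj : α j = true
        · have hji : (j:ℕ) < (i:ℕ) := by
            by_contra hc
            have : α i = true := hmono i j (show (i:ℕ) ≤ (j:ℕ) by omega) hj
            rw [this] at hαi'
            exact Bool.noConfusion hαi'
          simp [hj, hji]
        · simp [hj]
      rw [sum_ind_interval 0 (i:ℕ) (by omega)] at hub
      have : cntq α 0 = ∑ j : Fin n, if 0 ≤ (j:ℕ) ∧ α j = true then 1 else 0 := rfl
      omega
  refine ⟨hshape, ?_⟩
  have hα : α = fun i : Fin n => decide ((i:ℕ) < s) := by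
    funext i
    by_cases hi : (i:ℕ) < s
    · rw [(hshape i (Nat.zero_le _)).2 (by omega)]
      simp [hi]
    · have : α i ≠ true := fun hc => hi (by have := (hshape i (Nat.zero_le _)).1 hc; omega)
      have : α i = false := by
        cases hv : α i
        · rfl
        · exact absurd hv this
      rw [this]
      simp [hi]
  have hGα : G α = Fq n s := by
    rw [hα]
    exact hG.1 s hsn
  refine ⟨fun B => if B ∈ PMs α 0 s then 1 else 0, ?_, ?_, ?_⟩
  · intro B hB
    left
    by_contra hc
    apply hB
    show (if B ∈ PMs α 0 s then (1:ℚ) else 0) = 0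
    rw [if_neg hc]
  · intro B hB
    show (if B ∈ PMs α 0 s then (1:ℚ) else 0) = 1
    rw [if_pos hB]
  · rw [hGα, Fq_eq_sum, ← PMs_zero]
    have hpt : ∀ B : Fin n → Bool, (if B ∈ PMs α 0 s then (1:ℚ) else 0) • thetaMon B
        = if B ∈ PMs α 0 s then thetaMon B else 0 := by
      intro B
      split_ifs <;> simp
    calc ∑ B ∈ PMs α 0 s, thetaMon B
        = ∑ B ∈ (Finset.univ ∩ PMs α 0 s), thetaMon B := by rw [Finset.univ_inter]
      _ = ∑ B : Fin n → Bool, if B ∈ PMs α 0 s then thetaMon B else 0 :=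
          (Finset.sum_ite_mem Finset.univ (PMs α 0 s) thetaMon).symm
      _ = ∑ B : Fin n → Bool, (if B ∈ PMs α 0 s then (1:ℚ) else 0) • thetaMon B :=
          Finset.sum_congr rfl (fun B _ => (hpt B).symm)

end Help

section MainSec

open Finset

variable {n : ℕ}

lemma main_lemma (G : (Fin n → Bool) → ExteriorAlgebra ℚ (Fin n → ℚ)) (hG : GRec n G) :
    ∀ (N : ℕ) (α : Fin n → Bool) (q a : ℕ), wtv α < N → shape α q a → q + a ≤ n →
      Jst G α q a := by
  intro N
  induction N with
  | zero =>
    intro α q a h _ _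
    exact absurd h (Nat.not_lt_zero _)
  | succ N ih =>
    intro α q a hN hsh hle
    by_cases hmono : ∀ i j : Fin n, i ≤ j → α j = true → α i = true
    · obtain ⟨hsh0, hJ⟩ := Jst_base hG hmono
      exact Jst_transfer hsh0 hsh (Nat.zero_le q) (by simpa using cntq_le_n α 0) hle hJ
    · push_neg at hmono
      obtain ⟨i0, j0, hij0, hαj0, hαi0⟩ := hmono
      -- the last one `t` and the last zero `p` before it
      have hTne : (Finset.univ.filter fun j : Fin n => α j = true).Nonempty :=
        ⟨j0, by simp [hαj0]⟩
      have hαt : α ((Finset.univ.filter fun j : Fin n => α j = true).max' hTne) = true :=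
        (Finset.mem_filter.1 (Finset.max'_mem _ hTne)).2
      set t := (Finset.univ.filter fun j : Fin n => α j = true).max' hTne with htdef
      have htmax : ∀ j : Fin n, α j = true → j ≤ t := fun j hj =>
        Finset.le_max' _ j (by simp [hj])
      have hαi0' : α i0 = false := by
        cases hv : α i0
        · rfl
        · exact absurd hv hαi0
      have hi0t : i0 < t := by
        have h1 : i0 ≠ j0 := fun h => hαi0 (h ▸ hαj0)
        exact lt_of_lt_of_le (lt_of_le_of_ne hij0 h1) (htmax j0 hαj0)
      have hPne : (Finset.univ.filter fun i : Fin n => i < t ∧ α i = false).Nonempty :=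
        ⟨i0, by simp [hi0t, hαi0']⟩
      have hpmem := (Finset.mem_filter.1 (Finset.max'_mem _ hPne)).2
      set p := (Finset.univ.filter fun i : Fin n => i < t ∧ α i = false).max' hPne with hpdef
      obtain ⟨hpt, hαp⟩ := hpmem
      have hpmax : ∀ i : Fin n, p < i → i ≤ t → α i = true := by
        intro i h1 h2
        rcases lt_or_eq_of_le h2 with h2 | h2
        · by_contra hc
          have hfc : α i = false := by
            cases hv : α i
            · rfl
            · exact absurd hv hc
          have : i ≤ p := Finset.le_max' _ i (by simp [h2, hfc])
          exact absurd h1 (not_lt.2 this)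
        · rw [h2]
          exact hαt
      have hptv : (p:ℕ) < (t:ℕ) := hpt
      have htlt : (t:ℕ) < n := t.isLt
      set s := (t:ℕ) - (p:ℕ) with hsdef
      have hs : 1 ≤ s := by omega
      have hps : (p:ℕ) + s < n := by omega
      have hpts : (p:ℕ) + s = (t:ℕ) := by omega
      -- characterization of α beyond p
      have hprop : ∀ i : Fin n, (p:ℕ) ≤ (i:ℕ) →
          (α i = true ↔ ((p:ℕ) < (i:ℕ) ∧ (i:ℕ) ≤ (t:ℕ))) := by
        intro i hi
        constructor
        · intro hαi
          have h2 : (i:ℕ) ≤ (t:ℕ) := htmax i hαi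
          have h1 : (p:ℕ) ≠ (i:ℕ) := by
            intro hc
            have hip : i = p := Fin.ext hc.symm
            rw [hip, hαp] at hαi
            exact Bool.noConfusion hαi
          exact ⟨by omega, h2⟩
        · rintro ⟨h1, h2⟩
          exact hpmax i h1 h2
      have hshp : shape α ((p:ℕ)+1) s := by
        intro i hi
        rw [hprop i (by omega)]
        constructor
        · rintro ⟨h1, h2⟩
          omega
        · intro h1
          omega
      have hq : (p:ℕ) + 1 ≤ q := by
        by_contra hc
        have hqp : q ≤ (p:ℕ) := by omega
        have h2 : ¬ ((p:ℕ) < q + a) := by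
          intro hcc
          rw [(hsh p hqp).2 hcc] at hαp
          exact Bool.noConfusion hαp
        have h3 : (t:ℕ) < q + a := (hsh t (by omega)).1 hαt
        omega
      -- set up the recursion
      have hrec0 := hG.2 α (p:ℕ) s hs hps
      have hαL : (fun i : Fin n => if (i:ℕ) < (p:ℕ) then α i
          else decide ((p:ℕ) < (i:ℕ) ∧ (i:ℕ) ≤ (p:ℕ) + s)) = α := by
        funext i
        by_cases hi : (i:ℕ) < (p:ℕ)
        · rw [if_pos hi]
        · rw [if_neg hi]
          cases hv : α i
          · apply decide_eq_false
            intro hcc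
            rw [(hprop i (by omega)).2 ⟨hcc.1, by omega⟩] at hv
            exact Bool.noConfusion hv
          · apply decide_eq_true
            have h4 := (hprop i (by omega)).1 hv
            omega
      rw [hαL] at hrec0
      have hα2e : (fun i : Fin n => if (i:ℕ) < (p:ℕ) then α i
            else decide ((i:ℕ) < (p:ℕ) + s - 1))
          = (fun i : Fin n => if (i:ℕ) < (p:ℕ) then α i
            else decide ((i:ℕ) < (p:ℕ) + (s - 1))) := by
        have he : (p:ℕ) + s - 1 = (p:ℕ) + (s-1) := by omega
        rw [he]
      rw [hα2e] at hrec0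
      set α1 := (fun i : Fin n => if (i:ℕ) < (p:ℕ) then α i
        else decide ((i:ℕ) < (p:ℕ) + s)) with hα1def
      set α2 := (fun i : Fin n => if (i:ℕ) < (p:ℕ) then α i
        else decide ((i:ℕ) < (p:ℕ) + (s - 1))) with hα2def
      have hrec : G α = G α1
          - ((-1:ℚ) ^ onesBelow α (p:ℕ)) • (theta n p * G α2) := hrec0
      -- agreement below p
      have hag1 : ∀ i : Fin n, (i:ℕ) < (p:ℕ) → α1 i = α i := by
        intro i hi
        show (if (i:ℕ) < (p:ℕ) then α i else decide ((i:ℕ) < (p:ℕ) + s)) = α i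
        rw [if_pos hi]
      have hag2 : ∀ i : Fin n, (i:ℕ) < (p:ℕ) → α2 i = α i := by
        intro i hi
        show (if (i:ℕ) < (p:ℕ) then α i else decide ((i:ℕ) < (p:ℕ) + (s-1))) = α i
        rw [if_pos hi]
      have hsh1 : shape α1 (p:ℕ) s := shape_ifdecide α (p:ℕ) s
      have hsh2 : shape α2 (p:ℕ) (s-1) := shape_ifdecide α (p:ℕ) (s-1)
      -- weights decrease
      have hα1eval : ∀ i : Fin n, ¬ ((i:ℕ) < (p:ℕ)) →
          α1 i = decide ((i:ℕ) < (p:ℕ) + s) := by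
        intro i hi
        show (if (i:ℕ) < (p:ℕ) then α i else decide ((i:ℕ) < (p:ℕ) + s)) = _
        rw [if_neg hi]
      have hα2eval : ∀ i : Fin n, ¬ ((i:ℕ) < (p:ℕ)) →
          α2 i = decide ((i:ℕ) < (p:ℕ) + (s-1)) := by
        intro i hi
        show (if (i:ℕ) < (p:ℕ) then α i else decide ((i:ℕ) < (p:ℕ) + (s-1))) = _
        rw [if_neg hi]
      have hw1 : wtv α1 + (t:ℕ) = wtv α + (p:ℕ) := by
        have hα1t : α1 t = false := by
          rw [hα1eval t (by omega)]
          apply decide_eq_false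
          omega
        have hα1p : α1 p = true := by
          rw [hα1eval p (by omega)]
          apply decide_eq_true
          omega
        unfold wtv
        have hts : ((t:ℕ)) = ∑ i : Fin n, if i = t then (i:ℕ) else 0 := by
          rw [Finset.sum_ite_eq' Finset.univ t (fun i => (i:ℕ)), if_pos (Finset.mem_univ t)]
        have hps' : ((p:ℕ)) = ∑ i : Fin n, if i = p then (i:ℕ) else 0 := by
          rw [Finset.sum_ite_eq' Finset.univ p (fun i => (i:ℕ)), if_pos (Finset.mem_univ p)]
        rw [hts, hps', ← Finset.sum_add_distrib, ← Finset.sum_add_distrib]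
        refine Finset.sum_congr rfl fun i _ => ?_
        by_cases hit : i = t
        · have hnt : i ≠ p := by
            intro h
            rw [hit] at h
            rw [h] at hαt
            rw [hαt] at hαp
            exact Bool.noConfusion hαp
          rw [if_pos hit, if_neg hnt, hit, hα1t, hαt]
          simp
        · rw [if_neg hit]
          by_cases hip : i = p
          · rw [if_pos hip, hip, hα1p, hαp]
            simp
          · rw [if_neg hip]
            have hvp : (i:ℕ) ≠ (p:ℕ) := fun h => hip (Fin.ext h)
            have hvt : (i:ℕ) ≠ (t:ℕ) := fun h => hit (Fin.ext h)
            have heq : α1 i = α i := by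
              by_cases hi : (i:ℕ) < (p:ℕ)
              · exact hag1 i hi
              · rw [hα1eval i hi]
                cases hv : α i
                · apply decide_eq_false
                  intro hcc
                  rw [(hprop i (by omega)).2 ⟨by omega, by omega⟩] at hv
                  exact Bool.noConfusion hv
                · apply decide_eq_true
                  have h4 := (hprop i (by omega)).1 hv
                  omega
            rw [heq]
      have hwlt1 : wtv α1 < wtv α := by omega
      have hw2 : wtv α2 ≤ wtv α1 := by
        unfold wtv
        apply Finset.sum_le_sum
        intro i _
        by_cases hi : (i:ℕ) < (p:ℕ)
        · rw [hag1 i hi, hag2 i hi]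
        · rw [hα1eval i hi, hα2eval i hi]
          by_cases h2 : (i:ℕ) < (p:ℕ) + (s-1)
          · rw [decide_eq_true h2, decide_eq_true (show (i:ℕ) < (p:ℕ) + s by omega)]
          · rw [decide_eq_false h2]
            simp
      -- induction hypotheses
      have hle1 : (p:ℕ) + s ≤ n := le_of_lt hps
      have hle2 : (p:ℕ) + (s-1) ≤ n := by omega
      obtain ⟨f1, hsupp1, hone1, hsum1⟩ := ih α1 (p:ℕ) s (by omega) hsh1 hle1
      obtain ⟨f2, hsupp2, hone2, hsum2⟩ := ih α2 (p:ℕ) (s-1) (by omega) hsh2 hle2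
      -- the product sum
      have hmulsum : theta n p * G α2
          = ∑ B : Fin n → Bool, (if B p = true
              then ((-1:ℚ)^(onesBelow (Function.update B p false) (p:ℕ))
                * f2 (Function.update B p false))
              else 0) • thetaMon B := by
        rw [hsum2, Finset.mul_sum]
        rw [Finset.sum_congr rfl (fun B _ => mul_smul_comm (f2 B) (theta n p) (thetaMon B))]
        rw [← Finset.sum_filter_add_sum_filter_not Finset.univ
          (fun B : Fin n → Bool => B p = true)]
        have hz : ∀ B ∈ Finset.univ.filter (fun B : Fin n → Bool => B p = true),
            f2 B • (theta n p * thetaMon B) = 0 := by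
          intro B hB
          rw [theta_mul_thetaMon_of_true (Finset.mem_filter.1 hB).2, smul_zero]
        rw [Finset.sum_congr rfl hz, Finset.sum_const_zero, zero_add]
        have hstep : ∀ B ∈ Finset.univ.filter (fun B : Fin n → Bool => ¬ B p = true),
            f2 B • (theta n p * thetaMon B)
              = (((-1:ℚ)^(onesBelow B (p:ℕ))) * f2 B) • thetaMon (Function.update B p true) := by
          intro B hB
          have hBp : B p = false := by
            have h1 := (Finset.mem_filter.1 hB).2
            cases hv : B p
            · rfl
            · exact absurd hv h1
          rw [theta_mul_thetaMon_of_false hBp, smul_smul, mul_comm]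
        rw [Finset.sum_congr rfl hstep]
        have hrhs : (∑ B : Fin n → Bool, (if B p = true
              then ((-1:ℚ)^(onesBelow (Function.update B p false) (p:ℕ))
                * f2 (Function.update B p false))
              else 0) • thetaMon B)
            = ∑ B ∈ Finset.univ.filter (fun B : Fin n → Bool => B p = true),
              (((-1:ℚ)^(onesBelow (Function.update B p false) (p:ℕ))
                * f2 (Function.update B p false))) • thetaMon B := by
          rw [Finset.sum_filter]
          refine Finset.sum_congr rfl fun B _ => ?_
          by_cases hB : B p = true
          · rw [if_pos hB, if_pos hB]
          · rw [if_neg hB, if_neg hB, zero_smul]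
        rw [hrhs]
        refine Finset.sum_nbij' (i := fun B => Function.update B p true)
          (j := fun B => Function.update B p false) ?_ ?_ ?_ ?_ ?_
        · intro B hB
          simp [Function.update_self]
        · intro B hB
          simp [Function.update_self]
        · intro B hB
          have hBp : B p = false := by
            have h1 := (Finset.mem_filter.1 hB).2
            cases hv : B p
            · rfl
            · exact absurd hv h1
          show Function.update (Function.update B p true) p false = B
          rw [Function.update_idem, ← hBp, Function.update_eq_self]
        · intro B hB
          have hBp : B p = true := (Finset.mem_filter.1 hB).2
          show Function.update (Function.update B p false) p true = B
          rw [Function.update_idem, ← hBp, Function.update_eq_self]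
        · intro B hB
          have hBp : B p = false := by
            have h1 := (Finset.mem_filter.1 hB).2
            cases hv : B p
            · rfl
            · exact absurd hv h1
          have hinv : Function.update (Function.update B p true) p false = B := by
            rw [Function.update_idem, ← hBp, Function.update_eq_self]
          show ((-1:ℚ) ^ onesBelow B (p:ℕ) * f2 B) • thetaMon (Function.update B p true)
            = ((-1:ℚ) ^ onesBelow (Function.update (Function.update B p true) p false) (p:ℕ)
                * f2 (Function.update (Function.update B p true) p false))
              • thetaMon (Function.update B p true)
          rw [hinv]
      -- the global sum
      have hGsum : G α = ∑ B : Fin n → Bool,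
          (f1 B - ((-1:ℚ)^(onesBelow α (p:ℕ))) * (if B p = true
              then ((-1:ℚ)^(onesBelow (Function.update B p false) (p:ℕ))
                * f2 (Function.update B p false))
              else 0)) • thetaMon B := by
        rw [hrec, hsum1, hmulsum, Finset.smul_sum, ← Finset.sum_sub_distrib]
        refine Finset.sum_congr rfl fun B _ => ?_
        rw [smul_smul, ← sub_smul]
      -- membership bookkeeping
      have hDrp1 : Drp α1 (p:ℕ) = Drp α (p:ℕ) := Drp_congr hag1
      have hDrp2 : Drp α2 (p:ℕ) = Drp α (p:ℕ) := Drp_congr hag2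
      have hDrpsub : Drp α (p:ℕ) ⊆ Drp α ((p:ℕ)+1) := Drp_mono (by omega)
      have hupd : ∀ (B : Fin n → Bool) (i : Fin n), i ≠ p →
          Function.update B p false i = B i := fun B i hi => Function.update_of_ne hi _ _
      have hPM_false : ∀ B : Fin n → Bool, B p = false →
          (B ∈ PMs α1 (p:ℕ) s ↔ B ∈ PMs α ((p:ℕ)+1) s) := by
        intro B hBp
        have hcs := cntq_succ B p
        rw [hBp] at hcs
        simp only [Bool.false_eq_true, if_false, zero_add] at hcs
        rw [mem_PMs, mem_PMs]
        constructor
        · rintro ⟨h1, h2⟩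
          refine ⟨?_, by omega⟩
          intro i hi
          by_cases hip : (i:ℕ) < (p:ℕ)
          · exact (h1 i hip).trans (hag1 i hip)
          · have hieq : i = p := Fin.ext (by omega)
            rw [hieq, hBp, hαp]
        · rintro ⟨h1, h2⟩
          refine ⟨fun i hi => (h1 i (by omega)).trans (hag1 i hi).symm, by omega⟩
      have hPM_true : ∀ B : Fin n → Bool, B p = true →
          (Function.update B p false ∈ PMs α2 (p:ℕ) (s-1) ↔ B ∈ PMs α1 (p:ℕ) s) := by
        intro B hBp
        have hcnteq : cntq (Function.update B p false) ((p:ℕ)+1) = cntq B ((p:ℕ)+1) := by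
          apply cntq_congr
          intro i hi
          exact hupd B i (fun h => by rw [h] at hi; omega)
        have hC := cntq_succ (Function.update B p false) p
        rw [Function.update_self] at hC
        simp only [Bool.false_eq_true, if_false, zero_add] at hC
        have hBc := cntq_succ B p
        rw [hBp] at hBc
        simp only [if_true] at hBc
        rw [mem_PMs, mem_PMs]
        constructor
        · rintro ⟨h1, h2⟩
          refine ⟨?_, by omega⟩
          intro i hi
          have hip : i ≠ p := fun h => by rw [h] at hi; omega
          calc B i = Function.update B p false i := (hupd B i hip).symm
            _ = α2 i := h1 i hi
            _ = α i := hag2 i hi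
            _ = α1 i := (hag1 i hi).symm
        · rintro ⟨h1, h2⟩
          refine ⟨?_, by omega⟩
          intro i hi
          have hip : i ≠ p := fun h => by rw [h] at hi; omega
          calc Function.update B p false i = B i := hupd B i hip
            _ = α1 i := h1 i hi
            _ = α i := hag1 i hi
            _ = α2 i := (hag2 i hi).symm
      have hDrp_upd : ∀ B : Fin n → Bool, Function.update B p false ∈ Drp α (p:ℕ) →
          B ∈ Drp α (p:ℕ) := by
        intro B hC
        rw [mem_Drp] at hC ⊢
        obtain ⟨j, hj, h1, h2, h3⟩ := hC
        refine ⟨j, hj, ?_, ?_, h3⟩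
        · intro i hi
          have hiv : (i:ℕ) < (j:ℕ) := hi
          have hip : i ≠ p := fun h => by rw [h] at hiv; omega
          rw [← hupd B i hip]
          exact h1 i hi
        · have hjp : j ≠ p := fun h => by rw [h] at hj; omega
          rw [← hupd B j hjp]
          exact h2
      have hε2 : ((-1:ℚ)^(onesBelow α (p:ℕ))) * ((-1:ℚ)^(onesBelow α (p:ℕ))) = 1 := by
        rw [← pow_add]
        exact Even.neg_one_pow ⟨onesBelow α (p:ℕ), rfl⟩
      -- the invariant at cut p+1
      have hJp : Jst G α ((p:ℕ)+1) s := by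
        refine ⟨fun B => f1 B - ((-1:ℚ)^(onesBelow α (p:ℕ))) * (if B p = true
            then ((-1:ℚ)^(onesBelow (Function.update B p false) (p:ℕ))
              * f2 (Function.update B p false))
            else 0), ?_, ?_, hGsum⟩
        · intro B hgB
          by_cases hBp : B p = true
          · by_cases hf2 : f2 (Function.update B p false) = 0
            · have hf1 : f1 B ≠ 0 := by
                intro hc
                apply hgB
                show f1 B - ((-1:ℚ)^(onesBelow α (p:ℕ))) * (if B p = true
                    then ((-1:ℚ)^(onesBelow (Function.update B p false) (p:ℕ))
                      * f2 (Function.update B p false))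
                    else 0) = 0
                rw [if_pos hBp, hf2, hc]
                ring
              rcases hsupp1 B hf1 with h | h
              · exfalso
                have hf2' := hone2 _ ((hPM_true B hBp).2 h)
                exact one_ne_zero (hf2'.symm.trans hf2)
              · right
                exact hDrpsub (hDrp1 ▸ h)
            · rcases hsupp2 _ hf2 with h | h
              · exfalso
                apply hgB
                show f1 B - ((-1:ℚ)^(onesBelow α (p:ℕ))) * (if B p = true
                    then ((-1:ℚ)^(onesBelow (Function.update B p false) (p:ℕ))
                      * f2 (Function.update B p false))
                    else 0) = 0
                have hm : onesBelow (Function.update B p false) (p:ℕ) = onesBelow α (p:ℕ) := by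
                  apply onesBelow_congr
                  intro i hi
                  rw [(mem_PMs.1 h).1 i hi, hag2 i hi]
                have hf1 : f1 B = 1 := hone1 B ((hPM_true B hBp).1 h)
                have hf2' : f2 (Function.update B p false) = 1 := hone2 _ h
                rw [if_pos hBp, hm, hf1, hf2']
                linear_combination -hε2
              · right
                exact hDrpsub (hDrp_upd B (hDrp2 ▸ h))
          · have hf1 : f1 B ≠ 0 := by
              intro hc
              apply hgB
              show f1 B - ((-1:ℚ)^(onesBelow α (p:ℕ))) * (if B p = true
                  then ((-1:ℚ)^(onesBelow (Function.update B p false) (p:ℕ))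
                    * f2 (Function.update B p false))
                  else 0) = 0
              rw [if_neg hBp, hc]
              ring
            rcases hsupp1 B hf1 with h | h
            · left
              have hBpf : B p = false := by
                cases hv : B p
                · rfl
                · exact absurd hv hBp
              exact (hPM_false B hBpf).1 h
            · right
              exact hDrpsub (hDrp1 ▸ h)
        · intro B hB
          have h1 := mem_PMs.1 hB
          have hBp : B p = false := by
            have h2 := h1.1 p (by omega)
            rw [h2, hαp]
          show f1 B - ((-1:ℚ)^(onesBelow α (p:ℕ))) * (if B p = true
              then ((-1:ℚ)^(onesBelow (Function.update B p false) (p:ℕ))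
                * f2 (Function.update B p false))
              else 0) = 1
          rw [if_neg (show ¬ B p = true by rw [hBp]; exact Bool.false_ne_true)]
          rw [hone1 B ((hPM_false B hBp).2 hB)]
          ring
      exact Jst_transfer hshp hsh hq (by omega) hle hJp

end MainSec

section FinalHelpers

open Finset

variable {n : ℕ}

lemma cntq_n (B : Fin n → Bool) : cntq B n = 0 :=
  Finset.sum_eq_zero fun i _ => if_neg (fun hc => absurd i.isLt (not_lt.2 hc.1))

lemma mem_PMs_n {α B : Fin n → Bool} : B ∈ PMs α n 0 ↔ B = α := by
  rw [mem_PMs]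
  constructor
  · rintro ⟨h1, -⟩
    funext i
    exact h1 i i.isLt
  · rintro rfl
    exact ⟨fun i _ => rfl, cntq_n _⟩

lemma mem_Drp_n {α B : Fin n → Bool} : B ∈ Drp α n ↔ LexLt B α := by
  rw [mem_Drp, LexLt]
  constructor
  · rintro ⟨j, -, h1, h2, h3⟩
    exact ⟨j, h1, h2, h3⟩
  · rintro ⟨j, h1, h2, h3⟩
    exact ⟨j, j.isLt, h1, h2, h3⟩

end FinalHelpers

/-- The lexicographically largest monomial appearing in `G_α` is `θ^α`, with
coefficient `1`: `G_α = θ^α + Σ_{β <_lex α} c_β θ^β`. -/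
theorem stmt16 (n : ℕ) (G : (Fin n → Bool) → ExteriorAlgebra ℚ (Fin n → ℚ))
    (hG : GRec n G) (α : Fin n → Bool) :
    ∃ c : (Fin n → Bool) → ℚ,
      G α = thetaMon α +
        ∑ β ∈ Finset.univ.filter (fun β => LexLt β α), c β • thetaMon β := by
  classical
  obtain ⟨f, hsupp, hone, hsum⟩ := main_lemma G hG (wtv α + 1) α n 0 (by omega)
    (fun i hi => absurd i.isLt (not_lt.2 (by omega))) (by omega)
  refine ⟨f, ?_⟩
  have hfα : f α = 1 := hone α (mem_PMs_n.2 rfl)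
  rw [hsum, ← Finset.add_sum_erase Finset.univ (fun B => f B • thetaMon B) (Finset.mem_univ α),
    hfα, one_smul]
  congr 1
  refine (Finset.sum_subset ?_ ?_).symm
  · intro B hB
    rw [Finset.mem_filter] at hB
    obtain ⟨-, j, h1, h2, h3⟩ := hB
    refine Finset.mem_erase.2 ⟨?_, Finset.mem_univ B⟩
    intro hc
    rw [hc, h3] at h2
    exact Bool.noConfusion h2
  · intro B hB hBn
    have hBα : B ≠ α := (Finset.mem_erase.1 hB).1
    have hf0 : f B = 0 := by
      by_contra hc
      rcases hsupp B hc with h | h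
      · exact hBα (mem_PMs_n.1 h)
      · exact hBn (Finset.mem_filter.2 ⟨Finset.mem_univ B, mem_Drp_n.1 h⟩)
    rw [hf0, zero_smul]
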